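/- Let V be a finite-dimensional real inner product space and let Δ ⊆ V be a finite linearly independent set such that ⟨α, β⟩ ≤ 0 for all distinct α, β ∈ Δ. For a subset S ⊆ Δ, say that λ ∈ V is of type S if λ can be written as λ = λ₊ − λ₋, where λ₊ ∈ V satisfies ⟨λ₊, α⟩ = 0 for every α ∈ S and ⟨λ₊, β⟩ > 0 for every β ∈ Δ \ S, and λ₋ is a nonnegative real linear combination of elements of S. Then every λ ∈ V is of type S for exactly one subset S ⊆ Δ (so V is the disjoint union, over all subsets S ⊆ Δ, of the sets of elements of type S). -/

import Mathlib

open scoped RealInnerProductSpace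

set_option linter.unusedSectionVars false

section LCLaux

variable {V : Type*} [NormedAddCommGroup V] [InnerProductSpace ℝ V] [FiniteDimensional ℝ V]

/-- The cone of nonnegative combinations of elements of `Δ`. -/
def LCL.cone (Δ : Finset V) : Set V :=
  {x | ∃ c : V → ℝ, (∀ α, 0 ≤ c α) ∧ x = ∑ α ∈ Δ, c α • α}

lemma LCL.zero_mem_cone (Δ : Finset V) : (0 : V) ∈ LCL.cone Δ :=
  ⟨fun _ => 0, fun _ => le_rfl, by simp⟩

lemma LCL.convex_cone (Δ : Finset V) : Convex ℝ (LCL.cone Δ) := by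
  rintro x ⟨c, hc, rfl⟩ y ⟨d, hd, rfl⟩ a b ha hb _
  refine ⟨fun v => a * c v + b * d v,
    fun v => add_nonneg (mul_nonneg ha (hc v)) (mul_nonneg hb (hd v)), ?_⟩
  rw [Finset.smul_sum, Finset.smul_sum, ← Finset.sum_add_distrib]
  refine Finset.sum_congr rfl fun v _ => ?_
  simp [add_smul, mul_smul]

lemma LCL.smul_mem_cone (Δ : Finset V) {t : ℝ} (ht : 0 ≤ t) {x : V}
    (hx : x ∈ LCL.cone Δ) : t • x ∈ LCL.cone Δ := by
  obtain ⟨c, hc, rfl⟩ := hx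
  refine ⟨fun v => t * c v, fun v => mul_nonneg ht (hc v), ?_⟩
  rw [Finset.smul_sum]
  exact Finset.sum_congr rfl fun v _ => by rw [mul_smul]

lemma LCL.gen_mem_cone (Δ : Finset V) {β : V} (hβ : β ∈ Δ) : β ∈ LCL.cone Δ := by
  classical
  refine ⟨fun v => if v = β then 1 else 0, fun v => by positivity, ?_⟩
  rw [Finset.sum_eq_single β (fun b _ hb => by simp [hb]) (fun h => absurd hβ h)]
  simp

lemma LCL.isClosed_cone (Δ : Finset V)
    (hind : LinearIndependent ℝ (fun α : Δ => (α : V))) :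
    IsClosed (LCL.cone Δ) := by
  classical
  set W : Submodule ℝ V := Submodule.span ℝ (Set.range (fun α : Δ => (α : V))) with hW
  let b : Module.Basis Δ ℝ W := Module.Basis.span hind
  let P := W.orthogonalProjectionOnto
  let g : Δ → V → ℝ := fun i x => b.coord i (P x)
  have hgc : ∀ i, Continuous (g i) := fun i =>
    (LinearMap.continuous_of_finiteDimensional (b.coord i)).comp (P : V →L[ℝ] W).continuous
  have hproj : ∀ x (hx : x ∈ W), P x = ⟨x, hx⟩ := by
    intro x hx
    exact Subtype.ext (Submodule.starProjection_eq_self_iff.mpr hx)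
  have hrep : ∀ (xW : W) (c : Δ → ℝ), (xW : V) = ∑ i : Δ, c i • (i : V) →
      ∀ i, b.repr xW i = c i := by
    intro xW c hx i
    have hxW : xW = ∑ j : Δ, c j • b j := by
      apply Subtype.ext
      rw [hx]
      push_cast
      refine Finset.sum_congr rfl fun j _ => ?_
      rw [Module.Basis.span_apply]
    rw [hxW]
    simp only [map_sum, map_smul, Module.Basis.repr_self]
    rw [Finsupp.finset_sum_apply]
    simp only [Finsupp.smul_single, smul_eq_mul, mul_one, Finsupp.single_apply]
    simp [Finset.sum_ite_eq']
  have hKeq : LCL.cone Δ = (W : Set V) ∩ ⋂ i : Δ, {x | 0 ≤ g i x} := by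
    ext x
    constructor
    · rintro ⟨c, hc, rfl⟩
      have hsum : ∑ α ∈ Δ, c α • α = ∑ i : Δ, c (i : V) • (i : V) :=
        (Finset.sum_coe_sort Δ (fun v => c v • v)).symm
      have hxW : ∑ α ∈ Δ, c α • α ∈ W := by
        rw [hsum]
        exact Submodule.sum_mem W fun i _ =>
          Submodule.smul_mem W _ (Submodule.subset_span ⟨i, rfl⟩)
      refine ⟨hxW, Set.mem_iInter.2 fun i => ?_⟩
      have : g i (∑ α ∈ Δ, c α • α) = c (i : V) := by
        show b.coord i (P _) = _
        rw [hproj _ hxW, Module.Basis.coord_apply, hrep ⟨_, hxW⟩ (fun j => c (j : V)) hsum i]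
      simpa [this] using hc (i : V)
    · rintro ⟨hxW, hpos⟩
      simp only [Set.mem_iInter, Set.mem_setOf_eq] at hpos
      set xW : W := ⟨x, hxW⟩ with hxWdef
      have hx : x = ∑ i : Δ, b.repr xW i • (i : V) := by
        conv_lhs => rw [show x = (xW : V) from rfl, ← b.sum_repr xW]
        push_cast
        refine Finset.sum_congr rfl fun j _ => ?_
        rw [Module.Basis.span_apply]
      refine ⟨fun v => if h : v ∈ Δ then b.repr xW ⟨v, h⟩ else 0, ?_, ?_⟩
      · intro v
        by_cases h : v ∈ Δ
        · simp only [dif_pos h]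
          have := hpos ⟨v, h⟩
          rwa [show g ⟨v, h⟩ x = b.repr xW ⟨v, h⟩ by
            show b.coord _ (P x) = _
            rw [hproj x hxW, Module.Basis.coord_apply]] at this
        · simp [h]
      · rw [hx, ← Finset.sum_coe_sort Δ
          (fun v => (if h : v ∈ Δ then b.repr xW ⟨v, h⟩ else 0) • v)]
        refine Finset.sum_congr rfl fun i _ => ?_
        rw [dif_pos i.2]
  rw [hKeq]
  exact (Submodule.closed_of_finiteDimensional W).inter
    (isClosed_iInter fun i => isClosed_le continuous_const (hgc i))

end LCLaux

/-- **Langlands' combinatorial lemma.**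
Let `V` be a finite-dimensional real inner product space and `Δ ⊆ V` a finite linearly
independent set with pairwise non-positive inner products.  Every `λ ∈ V` is "of type `S`"
for exactly one subset `S ⊆ Δ`, where `λ` is of type `S` if `λ = λ₊ - λ₋` with
`⟨λ₊, α⟩ = 0` for all `α ∈ S`, `⟨λ₊, β⟩ > 0` for all `β ∈ Δ \ S`, and `λ₋` a nonnegative
linear combination of the elements of `S`. -/
theorem langlands_combinatorial_lemma
    {V : Type*} [NormedAddCommGroup V] [InnerProductSpace ℝ V] [FiniteDimensional ℝ V]
    (Δ : Finset V)
    (hind : LinearIndependent ℝ (fun α : Δ => (α : V)))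
    (hnonpos : ∀ α ∈ Δ, ∀ β ∈ Δ, α ≠ β → ⟪α, β⟫ ≤ 0)
    (l : V) :
    ∃! S : Finset V, S ⊆ Δ ∧
      ∃ lp lm : V,
        l = lp - lm ∧
        (∀ α ∈ S, ⟪lp, α⟫ = 0) ∧
        (∀ β ∈ Δ, β ∉ S → 0 < ⟪lp, β⟫) ∧
        ∃ c : V → ℝ, (∀ α, 0 ≤ c α) ∧ lm = ∑ α ∈ S, c α • α := by
  classical
  set Prop' : Finset V → Prop := fun S => S ⊆ Δ ∧
      ∃ lp lm : V,
        l = lp - lm ∧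
        (∀ α ∈ S, ⟪lp, α⟫ = 0) ∧
        (∀ β ∈ Δ, β ∉ S → 0 < ⟪lp, β⟫) ∧
        ∃ c : V → ℝ, (∀ α, 0 ≤ c α) ∧ lm = ∑ α ∈ S, c α • α with hProp
  -- Uniqueness
  have uniq : ∀ S₁ S₂, Prop' S₁ → Prop' S₂ → S₁ = S₂ := by
    rintro S₁ S₂ ⟨hS₁, lp₁, lm₁, hl₁, hz₁, hp₁, c₁, hc₁, hm₁⟩
      ⟨hS₂, lp₂, lm₂, hl₂, hz₂, hp₂, c₂, hc₂, hm₂⟩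
    have hnn₁ : ∀ α ∈ Δ, 0 ≤ ⟪lp₁, α⟫ := by
      intro α hα
      by_cases h : α ∈ S₁
      · exact le_of_eq (hz₁ α h).symm
      · exact le_of_lt (hp₁ α hα h)
    have hnn₂ : ∀ α ∈ Δ, 0 ≤ ⟪lp₂, α⟫ := by
      intro α hα
      by_cases h : α ∈ S₂
      · exact le_of_eq (hz₂ α h).symm
      · exact le_of_lt (hp₂ α hα h)
    have inner_nn : ∀ (lp : V), (∀ α ∈ Δ, 0 ≤ ⟪lp, α⟫) →
        ∀ (S : Finset V), S ⊆ Δ → ∀ (c : V → ℝ), (∀ α, 0 ≤ c α) →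
        0 ≤ ⟪lp, ∑ α ∈ S, c α • α⟫ := by
      intro lp hnn S hS c hc
      rw [inner_sum]
      refine Finset.sum_nonneg fun α hα => ?_
      rw [real_inner_smul_right]
      exact mul_nonneg (hc α) (hnn α (hS hα))
    have iz₁ : ⟪lp₁, lm₁⟫ = 0 := by
      rw [hm₁, inner_sum]
      refine Finset.sum_eq_zero fun α hα => ?_
      rw [real_inner_smul_right, hz₁ α hα, mul_zero]
    have iz₂ : ⟪lp₂, lm₂⟫ = 0 := by
      rw [hm₂, inner_sum]
      refine Finset.sum_eq_zero fun α hα => ?_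
      rw [real_inner_smul_right, hz₂ α hα, mul_zero]
    have i12 : 0 ≤ ⟪lp₁, lm₂⟫ := hm₂ ▸ inner_nn lp₁ hnn₁ S₂ hS₂ c₂ hc₂
    have i21 : 0 ≤ ⟪lp₂, lm₁⟫ := hm₁ ▸ inner_nn lp₂ hnn₂ S₁ hS₁ c₁ hc₁
    have hdiff : lp₁ - lp₂ = lm₁ - lm₂ := by
      have : lp₁ - lm₁ = lp₂ - lm₂ := hl₁ ▸ hl₂
      rw [sub_eq_sub_iff_sub_eq_sub] at this
      exact this
    have hlp : lp₁ = lp₂ := by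
      have hsq : ⟪lp₁ - lp₂, lp₁ - lp₂⟫ ≤ 0 := by
        nth_rewrite 2 [hdiff]
        rw [inner_sub_left, inner_sub_right, inner_sub_right, iz₁, iz₂]
        linarith
      exact sub_eq_zero.mp (real_inner_self_nonpos.mp hsq)
    ext α
    constructor
    · intro h
      by_contra h2
      have := hp₂ α (hS₁ h) h2
      rw [← hlp, hz₁ α h] at this
      exact lt_irrefl _ this
    · intro h
      by_contra h2
      have := hp₁ α (hS₂ h) h2
      rw [hlp, hz₂ α h] at this
      exact lt_irrefl _ this
  -- Existence
  have K_closed := LCL.isClosed_cone Δ hind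
  obtain ⟨m, hmK, hmin⟩ := exists_norm_eq_iInf_of_complete_convex
    ⟨0, LCL.zero_mem_cone Δ⟩ (K_closed.isComplete) (LCL.convex_cone Δ) (-l)
  rw [norm_eq_iInf_iff_real_inner_le_zero (LCL.convex_cone Δ) hmK] at hmin
  set lp := l + m with hlp
  have key : ∀ w ∈ LCL.cone Δ, ⟪lp, w - m⟫ ≥ 0 := by
    intro w hw
    have := hmin w hw
    have hrw : -l - m = -lp := by rw [hlp]; abel
    rw [hrw, inner_neg_left] at this
    linarith
  have hm0 : ⟪lp, m⟫ = 0 := by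
    have h1 := key 0 (LCL.zero_mem_cone Δ)
    have h2 := key ((2 : ℝ) • m) (LCL.smul_mem_cone Δ (by norm_num) hmK)
    rw [zero_sub, inner_neg_right] at h1
    have hrw : (2 : ℝ) • m - m = m := by
      rw [two_smul]; abel
    rw [hrw] at h2
    linarith
  have hnn : ∀ w ∈ LCL.cone Δ, 0 ≤ ⟪lp, w⟫ := by
    intro w hw
    have := key w hw
    rw [inner_sub_right, hm0] at this
    linarith
  have hnnΔ : ∀ α ∈ Δ, 0 ≤ ⟪lp, α⟫ := fun α hα => hnn α (LCL.gen_mem_cone Δ hα)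
  obtain ⟨c, hc, hmc⟩ := hmK
  set S : Finset V := Δ.filter (fun α => ⟪lp, α⟫ = 0) with hSdef
  have hSsub : S ⊆ Δ := Finset.filter_subset _ _
  -- coefficients vanish off S
  have hcz : ∀ α ∈ Δ, α ∉ S → c α = 0 := by
    have hsum : ∑ α ∈ Δ, c α * ⟪lp, α⟫ = 0 := by
      have : ⟪lp, m⟫ = ∑ α ∈ Δ, c α * ⟪lp, α⟫ := by
        rw [hmc, inner_sum]
        exact Finset.sum_congr rfl fun α _ => real_inner_smul_right _ _ _
      rw [← this, hm0]
    have hall := (Finset.sum_eq_zero_iff_of_nonneg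
      (fun α hα => mul_nonneg (hc α) (hnnΔ α hα))).mp hsum
    intro α hα hαS
    have hpos : 0 < ⟪lp, α⟫ := by
      rcases lt_or_eq_of_le (hnnΔ α hα) with h | h
      · exact h
      · exact absurd (Finset.mem_filter.mpr ⟨hα, h.symm⟩) hαS
    have := hall α hα
    rcases mul_eq_zero.mp this with h | h
    · exact h
    · exact absurd h (ne_of_gt hpos)
  have hmS : m = ∑ α ∈ S, c α • α := by
    rw [hmc]
    refine (Finset.sum_subset hSsub ?_).symm
    intro α hα hαS
    rw [hcz α hα hαS, zero_smul]
  refine ⟨S, ⟨hSsub, lp, m, by rw [hlp]; abel, ?_, ?_, c, hc, hmS⟩, fun S' hS' => uniq S' S hS' ?_⟩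
  · intro α hα
    exact (Finset.mem_filter.mp hα).2
  · intro β hβ hβS
    rcases lt_or_eq_of_le (hnnΔ β hβ) with h | h
    · exact h
    · exact absurd (Finset.mem_filter.mpr ⟨hβ, h.symm⟩) hβS
  · exact ⟨hSsub, lp, m, by rw [hlp]; abel, fun α hα => (Finset.mem_filter.mp hα).2,
      fun β hβ hβS => by
        rcases lt_or_eq_of_le (hnnΔ β hβ) with h | h
        · exact h
        · exact absurd (Finset.mem_filter.mpr ⟨hβ, h.symm⟩) hβS,
      c, hc, hmS⟩
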